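/- For every x₀ ∈ ℝ^d, every r ∈ (0,1), every a > 1, and every Borel set A ⊂ B_{φ_a(r)}(x₀) ∖ B_r(x₀) with μ_{x₀,r}(A) ≥ (1/2) μ_{x₀,r}( B_{φ_a(r)}(x₀) ∖ B_r(x₀) ), one has ∫_A ℓ(|z−x₀|) |z−x₀|^{−d} dz ≥ (σ_{d-1}/2) · L(r) · (ln a)/a, where σ_{d-1} = 2π^{d/2}/Γ(d/2) is the surface measure of the unit sphere in ℝ^d. -/

import Mathlib

open MeasureTheory Metric Set Filter
open scoped Topology

noncomputable section

/-- `L(r) = ∫_r^1 ℓ(s)/s ds`. -/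
def Lfun (ℓ : ℝ → ℝ) (r : ℝ) : ℝ := ∫ s in r..1, ℓ s / s

/-- `ℓ` is bounded away from `0` and `∞` on compact subsets of `(0,1)`. -/
def LocBddAway (ℓ : ℝ → ℝ) : Prop :=
  ∀ a b : ℝ, 0 < a → a ≤ b → b < 1 →
    ∃ m M : ℝ, 0 < m ∧ ∀ s : ℝ, a ≤ s → s ≤ b → m ≤ ℓ s ∧ ℓ s ≤ M

/-- the measure `μ_{x₀,r}`, with density
`x ↦ ℓ(|x-x₀|) L(|x-x₀|)⁻¹ |x-x₀|^{-d} 𝟙_{r ≤ |x-x₀| < 1}` w.r.t. Lebesgue measure,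
evaluated on a set `A`. -/
def muMeas (d : ℕ) (ℓ : ℝ → ℝ) (x₀ : EuclideanSpace ℝ (Fin d)) (r : ℝ)
    (A : Set (EuclideanSpace ℝ (Fin d))) : ℝ :=
  ∫ x in A ∩ {x | r ≤ ‖x - x₀‖ ∧ ‖x - x₀‖ < 1},
    ℓ ‖x - x₀‖ / (Lfun ℓ ‖x - x₀‖ * ‖x - x₀‖ ^ d)

/-- the surface measure `σ_{d-1} = 2 π^{d/2} / Γ(d/2)` of the unit sphere in `ℝ^d`. -/
def sphereSurf (d : ℕ) : ℝ := 2 * Real.pi ^ ((d : ℝ) / 2) / Real.Gamma ((d : ℝ) / 2)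

section Aux

variable {ℓ : ℝ → ℝ}

lemma g_intble (hLfin : ∀ r ∈ Set.Ioo (0:ℝ) 1, IntervalIntegrable (fun s => ℓ s / s) volume r 1)
    {u v : ℝ} (hu : 0 < u) (huv : u ≤ v) (hv : v ≤ 1) :
    IntervalIntegrable (fun s => ℓ s / s) volume u v := by
  rcases lt_or_ge u 1 with hu1 | hu1
  · refine (hLfin u ⟨hu, hu1⟩).mono_set ?_
    rw [uIcc_of_le huv, uIcc_of_le hu1.le]
    exact Icc_subset_Icc le_rfl hv
  · have h : u = v := le_antisymm huv (hv.trans hu1)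
    rw [h]

lemma Lfun_sub (hLfin : ∀ r ∈ Set.Ioo (0:ℝ) 1, IntervalIntegrable (fun s => ℓ s / s) volume r 1)
    {u v : ℝ} (hu : 0 < u) (huv : u ≤ v) (hv : v ≤ 1) :
    Lfun ℓ u = (∫ s in u..v, ℓ s / s) + Lfun ℓ v := by
  rcases lt_or_ge u 1 with hu1 | hu1
  · rw [Lfun, Lfun,
      intervalIntegral.integral_add_adjacent_intervals (g_intble hLfin hu huv hv)
        (g_intble hLfin (hu.trans_le huv) hv le_rfl)]
  · have h1 : u = 1 := le_antisymm (huv.trans hv) hu1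
    have h2 : v = 1 := le_antisymm hv (h1 ▸ huv)
    simp [h1, h2, Lfun]

lemma Lfun_anti (hℓpos : ∀ s : ℝ, 0 < s → s < 1 → 0 < ℓ s)
    (hLfin : ∀ r ∈ Set.Ioo (0:ℝ) 1, IntervalIntegrable (fun s => ℓ s / s) volume r 1)
    {u v : ℝ} (hu : 0 < u) (huv : u ≤ v) (hv : v < 1) :
    Lfun ℓ v ≤ Lfun ℓ u := by
  rw [Lfun_sub hLfin hu huv hv.le]
  have h : 0 ≤ ∫ s in u..v, ℓ s / s := by
    apply intervalIntegral.integral_nonneg huv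
    intro s hs
    exact (div_pos (hℓpos s (hu.trans_le hs.1) (lt_of_le_of_lt hs.2 hv))
      (hu.trans_le hs.1)).le
  linarith

lemma Lfun_pos (hℓpos : ∀ s : ℝ, 0 < s → s < 1 → 0 < ℓ s)
    (hLfin : ∀ r ∈ Set.Ioo (0:ℝ) 1, IntervalIntegrable (fun s => ℓ s / s) volume r 1)
    {u : ℝ} (hu : 0 < u) (hu1 : u < 1) : 0 < Lfun ℓ u :=
  intervalIntegral.intervalIntegral_pos_of_pos_on (hLfin u ⟨hu, hu1⟩)
    (fun s hs => div_pos (hℓpos s (hu.trans hs.1) hs.2) (hu.trans hs.1)) hu1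

lemma Lfun_contOn (hLfin : ∀ r ∈ Set.Ioo (0:ℝ) 1, IntervalIntegrable (fun s => ℓ s / s) volume r 1)
    {u v : ℝ} (hu : 0 < u) (hv : v < 1) :
    ContinuousOn (Lfun ℓ) (Icc u v) := by
  rcases le_or_gt u v with huv | huv
  · have hInt : IntegrableOn (fun s => ℓ s / s) (uIcc u v) volume := by
      rw [uIcc_of_le huv, integrableOn_Icc_iff_integrableOn_Ioc]
      exact (g_intble hLfin hu huv hv.le).1
    have hcont : ContinuousOn (fun x => (∫ s in x..v, ℓ s / s) + Lfun ℓ v) (Icc u v) := by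
      apply ContinuousOn.add _ continuousOn_const
      have := intervalIntegral.continuousOn_primitive_interval_left hInt
      rwa [uIcc_of_le huv] at this
    apply hcont.congr
    intro x hx
    exact Lfun_sub hLfin (hu.trans_le hx.1) hx.2 (hv.le)
  · rw [Icc_eq_empty (by linarith)]
    exact continuousOn_empty _

lemma limit_lem {a : ℝ} (ha : 1 < a) :
    Tendsto (fun n : ℕ => (n : ℝ) * (1 - a ^ (-(1:ℝ)/(n:ℝ)))) atTop (𝓝 (Real.log a)) := by
  have ha0 : 0 < a := lt_trans one_pos ha
  have hla : 0 < Real.log a := Real.log_pos ha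
  have h1 : Tendsto (fun n : ℕ => -Real.log a / (n : ℝ)) atTop (𝓝[≠] 0) := by
    apply tendsto_nhdsWithin_of_tendsto_nhds_of_eventually_within
    · exact tendsto_const_div_atTop_nhds_zero_nat _
    · filter_upwards [eventually_ge_atTop 1] with n hn
      have hn0 : 0 < (n : ℝ) := by exact_mod_cast hn
      have : -Real.log a / (n : ℝ) < 0 := div_neg_of_neg_of_pos (by linarith) hn0
      simp only [mem_compl_iff, mem_singleton_iff]
      exact ne_of_lt this
  have h2 : Tendsto (slope Real.exp 0) (𝓝[≠] 0) (𝓝 1) := by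
    have h := Real.hasDerivAt_exp 0
    rw [hasDerivAt_iff_tendsto_slope] at h
    simpa using h
  have h3 := (h2.comp h1).const_mul (Real.log a)
  rw [mul_one] at h3
  apply h3.congr'
  filter_upwards [eventually_ge_atTop 1] with n hn
  have hn0 : 0 < (n : ℝ) := by exact_mod_cast hn
  have hx : -Real.log a / (n : ℝ) ≠ 0 :=
    ne_of_lt (div_neg_of_neg_of_pos (by linarith) hn0)
  have hrpow : a ^ (-(1:ℝ)/(n:ℝ)) = Real.exp (-Real.log a / (n:ℝ)) := by
    rw [Real.rpow_def_of_pos ha0]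
    congr 1
    ring
  simp only [Function.comp_apply, slope_def_field, Real.exp_zero, sub_zero]
  rw [hrpow]
  field_simp [hla.ne']
  ring

lemma key_integral_lb (hℓpos : ∀ s : ℝ, 0 < s → s < 1 → 0 < ℓ s)
    (hLfin : ∀ r ∈ Set.Ioo (0:ℝ) 1, IntervalIntegrable (fun s => ℓ s / s) volume r 1)
    {r a ρ : ℝ} (hr : 0 < r) (hr1 : r < 1) (ha : 1 < a)
    (hρ0 : 0 < ρ) (hρ1 : ρ < 1) (hLρ : Lfun ℓ ρ = Lfun ℓ r / a)
    (Linv : ℝ → ℝ)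
    (hLinv₁ : ∀ u ∈ Set.Ioo (0:ℝ) 1, Linv (Lfun ℓ u) = u)
    (hLinv₂ : ∀ y : ℝ, 0 < y → Linv y ∈ Set.Ioo (0:ℝ) 1 ∧ Lfun ℓ (Linv y) = y) :
    Real.log a ≤ ∫ s in r..ρ, (ℓ s / s) * (Lfun ℓ s)⁻¹ := by
  have ha0 : 0 < a := lt_trans one_pos ha
  have hLr : 0 < Lfun ℓ r := Lfun_pos hℓpos hLfin hr hr1
  have hGL : ∀ u v : ℝ, r ≤ u → u ≤ v → v ≤ ρ →
      IntervalIntegrable (fun s => (ℓ s / s) * (Lfun ℓ s)⁻¹) volume u v := by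
    intro u v hru huv hvρ
    apply (g_intble hLfin (hr.trans_le hru) huv (hvρ.trans hρ1.le)).mul_continuousOn
    rw [uIcc_of_le huv]
    apply ContinuousOn.inv₀
    · exact (Lfun_contOn hLfin (hr.trans_le hru) (lt_of_le_of_lt hvρ hρ1)).mono le_rfl
    · intro s hs
      exact (Lfun_pos hℓpos hLfin (lt_of_lt_of_le (hr.trans_le hru) hs.1)
        (lt_of_le_of_lt (hs.2.trans hvρ) hρ1)).ne'
  have hbound : ∀ n : ℕ, 1 ≤ n →
      (n : ℝ) * (1 - a ^ (-(1:ℝ)/(n:ℝ))) ≤ ∫ s in r..ρ, (ℓ s / s) * (Lfun ℓ s)⁻¹ := by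
    intro n hn
    have hn0 : 0 < (n : ℝ) := by exact_mod_cast hn
    set c : ℕ → ℝ := fun k => Lfun ℓ r * a ^ (-(k:ℝ)/(n:ℝ)) with hc_def
    have hc : ∀ k, 0 < c k := fun k => mul_pos hLr (Real.rpow_pos_of_pos ha0 _)
    set p : ℕ → ℝ := fun k => Linv (c k) with hp_def
    have hpk : ∀ k, p k ∈ Set.Ioo (0:ℝ) 1 ∧ Lfun ℓ (p k) = c k := fun k => hLinv₂ _ (hc k)
    have hcanti : ∀ k j : ℕ, k < j → c j < c k := by
      intro k j hkj
      apply mul_lt_mul_of_pos_left _ hLr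
      apply Real.rpow_lt_rpow_left_iff ha |>.2
      have : (k : ℝ) < j := by exact_mod_cast hkj
      rw [div_lt_div_iff_of_pos_right hn0]
      linarith
    have hplt : ∀ k j : ℕ, k < j → p k < p j := by
      intro k j hkj
      by_contra hle
      push_neg at hle
      have := Lfun_anti hℓpos hLfin (hpk j).1.1 hle (hpk k).1.2
      rw [(hpk j).2, (hpk k).2] at this
      exact absurd this (not_le.2 (hcanti k j hkj))
    have hpmono : ∀ k j : ℕ, k ≤ j → p k ≤ p j := by
      intro k j hkj
      rcases eq_or_lt_of_le hkj with h | h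
      · rw [h]
      · exact (hplt k j h).le
    have hp0 : p 0 = r := by
      have h : c 0 = Lfun ℓ r := by simp [hc_def]
      rw [hp_def]; simp only []; rw [h]; exact hLinv₁ r ⟨hr, hr1⟩
    have hpn : p n = ρ := by
      have hcn : c n = Lfun ℓ r / a := by
        rw [hc_def]
        simp only []
        rw [neg_div, div_self hn0.ne', Real.rpow_neg_one]
        ring
      rw [hp_def]; simp only []; rw [hcn, ← hLρ]
      exact hLinv₁ ρ ⟨hρ0, hρ1⟩
    have hrp : ∀ k, r ≤ p k := fun k => hp0 ▸ hpmono 0 k (Nat.zero_le k)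
    have hpρ : ∀ k, k ≤ n → p k ≤ ρ := fun k hk => hpn ▸ hpmono k n hk
    have hsum := intervalIntegral.sum_integral_adjacent_intervals
      (f := fun s => (ℓ s / s) * (Lfun ℓ s)⁻¹) (μ := volume) (a := p) (n := n)
      (fun k hk => hGL (p k) (p (k+1)) (hrp k) (hpmono k (k+1) (Nat.le_succ k)) (hpρ (k+1) hk))
    rw [hp0, hpn] at hsum
    rw [← hsum]
    have hpiece : ∀ k, k < n →
        1 - a ^ (-(1:ℝ)/(n:ℝ)) ≤ ∫ s in p k..p (k+1), (ℓ s / s) * (Lfun ℓ s)⁻¹ := by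
      intro k hk
      have hint1 : IntervalIntegrable (fun s => (ℓ s / s) * (c k)⁻¹) volume (p k) (p (k+1)) :=
        (g_intble hLfin (hr.trans_le (hrp k)) (hpmono k (k+1) (Nat.le_succ k))
          ((hpρ (k+1) hk).trans hρ1.le)).mul_const _
      have hint2 := hGL (p k) (p (k+1)) (hrp k) (hpmono k (k+1) (Nat.le_succ k)) (hpρ (k+1) hk)
      have hmono : ∫ s in p k..p (k+1), (ℓ s / s) * (c k)⁻¹ ≤
          ∫ s in p k..p (k+1), (ℓ s / s) * (Lfun ℓ s)⁻¹ := by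
        apply intervalIntegral.integral_mono_on (hpmono k (k+1) (Nat.le_succ k)) hint1 hint2
        intro s hs
        have hs0 : 0 < s := lt_of_lt_of_le (hr.trans_le (hrp k)) hs.1
        have hs1 : s < 1 := lt_of_le_of_lt (hs.2.trans (hpρ (k+1) hk)) hρ1
        have hLs : 0 < Lfun ℓ s := Lfun_pos hℓpos hLfin hs0 hs1
        have hLsle : Lfun ℓ s ≤ c k := by
          rw [← (hpk k).2]
          exact Lfun_anti hℓpos hLfin (hpk k).1.1 hs.1 hs1
        have h : (c k)⁻¹ ≤ (Lfun ℓ s)⁻¹ := inv_anti₀ hLs hLsle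
        exact mul_le_mul_of_nonneg_left h
          (div_nonneg (hℓpos s hs0 hs1).le hs0.le)
      have heval : ∫ s in p k..p (k+1), (ℓ s / s) * (c k)⁻¹ = 1 - a ^ (-(1:ℝ)/(n:ℝ)) := by
        rw [intervalIntegral.integral_mul_const]
        have hLsub : Lfun ℓ (p k) = (∫ s in p k..p (k+1), ℓ s / s) + Lfun ℓ (p (k+1)) :=
          Lfun_sub hLfin (hpk k).1.1 (hpmono k (k+1) (Nat.le_succ k)) (hpk (k+1)).1.2.le
        have hval : ∫ s in p k..p (k+1), ℓ s / s = c k - c (k+1) := by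
          rw [(hpk k).2, (hpk (k+1)).2] at hLsub
          linarith
        rw [hval]
        have hck1 : c (k+1) = c k * a ^ (-(1:ℝ)/(n:ℝ)) := by
          rw [hc_def]
          simp only []
          rw [mul_assoc, ← Real.rpow_add ha0]
          congr 2
          push_cast
          ring
        rw [hck1]
        rw [sub_mul, mul_inv_cancel₀ (hc k).ne', mul_right_comm, mul_inv_cancel₀ (hc k).ne', one_mul]
      linarith [hmono, heval.ge]
    calc (n : ℝ) * (1 - a ^ (-(1:ℝ)/(n:ℝ)))
        = ∑ _k ∈ Finset.range n, (1 - a ^ (-(1:ℝ)/(n:ℝ))) := by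
          rw [Finset.sum_const, Finset.card_range, nsmul_eq_mul]
      _ ≤ ∑ k ∈ Finset.range n, ∫ s in p k..p (k+1), (ℓ s / s) * (Lfun ℓ s)⁻¹ :=
          Finset.sum_le_sum (fun k hk => hpiece k (Finset.mem_range.1 hk))
  exact le_of_tendsto (limit_lem ha) ((eventually_ge_atTop 1).mono hbound)

lemma const_eq (d : ℕ) (hd : 1 ≤ d) :
    (d : ℝ) * (volume (ball (0 : EuclideanSpace ℝ (Fin d)) 1)).toReal = sphereSurf d := by
  haveI : Nonempty (Fin d) := ⟨⟨0, hd⟩⟩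
  have hd0 : (0:ℝ) < (d:ℝ) := by exact_mod_cast hd
  have hΓpos : 0 < Real.Gamma ((d:ℝ)/2) := Real.Gamma_pos_of_pos (by linarith)
  have hΓ1pos : 0 < Real.Gamma ((d:ℝ)/2 + 1) := Real.Gamma_pos_of_pos (by linarith)
  rw [EuclideanSpace.volume_ball, Fintype.card_fin]
  rw [ENNReal.ofReal_one, one_pow, one_mul, ENNReal.toReal_ofReal
    (div_nonneg (pow_nonneg (Real.sqrt_nonneg _) _) hΓ1pos.le)]
  have hsq : Real.sqrt Real.pi ^ d = Real.pi ^ ((d:ℝ)/2) := by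
    rw [Real.sqrt_eq_rpow, ← Real.rpow_natCast (Real.pi ^ ((1:ℝ)/2)) d,
      ← Real.rpow_mul Real.pi_pos.le]
    congr 1
    ring
  have hΓ : Real.Gamma ((d:ℝ)/2 + 1) = ((d:ℝ)/2) * Real.Gamma ((d:ℝ)/2) :=
    Real.Gamma_add_one (by positivity)
  rw [hsq, hΓ, sphereSurf]
  field_simp

lemma polar_eq (d : ℕ) (hd : 1 ≤ d) (ℓ : ℝ → ℝ)
    (x₀ : EuclideanSpace ℝ (Fin d)) {r ρ : ℝ} (hr : 0 < r) (hρ1 : ρ < 1) (hrρ : r ≤ ρ) :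
    muMeas d ℓ x₀ r (ball x₀ ρ \ ball x₀ r) =
      sphereSurf d * ∫ s in r..ρ, (ℓ s / s) * (Lfun ℓ s)⁻¹ := by
  haveI : Nonempty (Fin d) := ⟨⟨0, hd⟩⟩
  haveI : Nontrivial (EuclideanSpace ℝ (Fin d)) := by infer_instance
  set F : ℝ → ℝ := fun s => ℓ s / (Lfun ℓ s * s ^ d) with hF_def
  set f : EuclideanSpace ℝ (Fin d) → ℝ := fun x => ‖x - x₀‖ with hf_def
  have hS : (ball x₀ ρ \ ball x₀ r) ∩ {x | r ≤ ‖x - x₀‖ ∧ ‖x - x₀‖ < 1} =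
      f ⁻¹' (Ico r ρ) := by
    ext x
    simp only [mem_inter_iff, mem_diff, mem_ball, mem_setOf_eq, mem_preimage, mem_Ico,
      dist_eq_norm, hf_def, not_lt]
    constructor
    · rintro ⟨⟨h1, h2⟩, h3, h4⟩
      exact ⟨h3, h1⟩
    · rintro ⟨h1, h2⟩
      exact ⟨⟨h2, h1⟩, h1, h2.trans hρ1⟩
  have step1 : muMeas d ℓ x₀ r (ball x₀ ρ \ ball x₀ r) = ∫ x, (Ico r ρ).indicator F (f x) := by
    rw [muMeas, hS, ← integral_indicator (measurableSet_Ico.preimage (by fun_prop))]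
    congr 1
  rw [step1]
  have step2 : ∫ x, (Ico r ρ).indicator F (f x) =
      ∫ x : EuclideanSpace ℝ (Fin d), (Ico r ρ).indicator F ‖x‖ :=
    integral_sub_right_eq_self (fun y => (Ico r ρ).indicator F ‖y‖) x₀
  rw [step2, integral_fun_norm_addHaar volume ((Ico r ρ).indicator F)]
  have hdim : Module.finrank ℝ (EuclideanSpace ℝ (Fin d)) = d := finrank_euclideanSpace_fin
  rw [hdim, nsmul_eq_mul, smul_eq_mul, ← mul_assoc, measureReal_def, const_eq d hd]
  congr 1
  have hind : ∀ y : ℝ, y ^ (d - 1) • (Ico r ρ).indicator F y =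
      (Ico r ρ).indicator (fun y => y ^ (d-1) * F y) y := by
    intro y
    by_cases h : y ∈ Ico r ρ <;> simp [h]
  calc ∫ y in Ioi (0:ℝ), y ^ (d - 1) • (Ico r ρ).indicator F y
      = ∫ y in Ioi (0:ℝ), (Ico r ρ).indicator (fun y => y ^ (d-1) * F y) y := by
        simp_rw [hind]
    _ = ∫ y in Ioi (0:ℝ) ∩ Ico r ρ, y ^ (d-1) * F y := by
        rw [setIntegral_indicator measurableSet_Ico]
    _ = ∫ y in Ico r ρ, y ^ (d-1) * F y := by
        rw [show Ioi (0:ℝ) ∩ Ico r ρ = Ico r ρ from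
          inter_eq_right.2 fun y hy => mem_Ioi.2 (lt_of_lt_of_le hr hy.1)]
    _ = ∫ y in Ioo r ρ, y ^ (d-1) * F y := integral_Ico_eq_integral_Ioo
    _ = ∫ y in Ioo r ρ, (ℓ y / y) * (Lfun ℓ y)⁻¹ := by
        apply setIntegral_congr_fun measurableSet_Ioo
        intro y hy
        have hy0 : 0 < y := hr.trans hy.1
        have hyd : (y:ℝ) ^ d = y ^ (d-1) * y := by
          rw [← pow_succ, Nat.sub_add_cancel hd]
        rw [hF_def]
        simp only []
        rw [hyd]
        rcases eq_or_ne (Lfun ℓ y) 0 with hL | hL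
        · simp [hL]
        · field_simp
    _ = ∫ y in Ioc r ρ, (ℓ y / y) * (Lfun ℓ y)⁻¹ := integral_Ioc_eq_integral_Ioo.symm
    _ = ∫ s in r..ρ, (ℓ s / s) * (Lfun ℓ s)⁻¹ :=
        (intervalIntegral.integral_of_le hrρ).symm

end Aux

/-- For every `x₀ ∈ ℝ^d`, every `r ∈ (0,1)`, every `a > 1` and every
Borel `A ⊂ B_{φ_a(r)}(x₀) ∖ B_r(x₀)` with
`μ_{x₀,r}(A) ≥ (1/2) μ_{x₀,r}(B_{φ_a(r)}(x₀) ∖ B_r(x₀))`, one has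
`∫_A ℓ(|z-x₀|)|z-x₀|^{-d} dz ≥ (σ_{d-1}/2) L(r) (ln a)/a`, where `φ_a(r) = L⁻¹(L(r)/a)`
and `σ_{d-1} = 2π^{d/2}/Γ(d/2)`. -/
theorem statement13 (d : ℕ) (hd : 1 ≤ d) (ℓ : ℝ → ℝ) (hℓmeas : Measurable ℓ)
    (hℓpos : ∀ s : ℝ, 0 < s → s < 1 → 0 < ℓ s) (hℓbdd : LocBddAway ℓ)
    (hLfin : ∀ r ∈ Set.Ioo (0:ℝ) 1, IntervalIntegrable (fun s => ℓ s / s) volume r 1)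
    (hLdiv : Filter.Tendsto (fun r => Lfun ℓ r) (𝓝[>] (0 : ℝ)) Filter.atTop)
    (Linv : ℝ → ℝ)
    (hLinv₁ : ∀ r ∈ Set.Ioo (0:ℝ) 1, Linv (Lfun ℓ r) = r)
    (hLinv₂ : ∀ y : ℝ, 0 < y → Linv y ∈ Set.Ioo (0:ℝ) 1 ∧ Lfun ℓ (Linv y) = y) :
    ∀ (x₀ : EuclideanSpace ℝ (Fin d)) (r a : ℝ), 0 < r → r < 1 → 1 < a →
      ∀ A : Set (EuclideanSpace ℝ (Fin d)), MeasurableSet A →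
        A ⊆ Metric.ball x₀ (Linv (Lfun ℓ r / a)) \ Metric.ball x₀ r →
        muMeas d ℓ x₀ r A ≥
          (1 / 2) * muMeas d ℓ x₀ r
            (Metric.ball x₀ (Linv (Lfun ℓ r / a)) \ Metric.ball x₀ r) →
        (∫ z in A, ℓ ‖z - x₀‖ / ‖z - x₀‖ ^ d)
          ≥ sphereSurf d / 2 * Lfun ℓ r * Real.log a / a := by
  intro x₀ r a hr hr1 ha A hA hAsub hAmu
  have ha0 : 0 < a := lt_trans one_pos ha
  have hLr : 0 < Lfun ℓ r := Lfun_pos hℓpos hLfin hr hr1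
  have hc : 0 < Lfun ℓ r / a := div_pos hLr ha0
  set ρ := Linv (Lfun ℓ r / a) with hρ_def
  obtain ⟨⟨hρ0, hρ1⟩, hLρ⟩ := hLinv₂ (Lfun ℓ r / a) hc
  have hrρ : r < ρ := by
    by_contra hle
    push_neg at hle
    have h1 := Lfun_anti hℓpos hLfin hρ0 hle hr1
    rw [hLρ] at h1
    have : Lfun ℓ r / a < Lfun ℓ r := by
      rw [div_lt_iff₀ ha0]
      nlinarith
    linarith
  -- bounds on ℓ on [r, ρ]
  obtain ⟨m, M, hm, hbound⟩ := hℓbdd r ρ hr hrρ.le hρ1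
  have hM0 : 0 ≤ M := le_trans (hm.le.trans (hbound r le_rfl hrρ.le).1) (hbound r le_rfl hrρ.le).2
  -- the ring identity and integral lower bound
  have hring : muMeas d ℓ x₀ r (ball x₀ ρ \ ball x₀ r) =
      sphereSurf d * ∫ s in r..ρ, (ℓ s / s) * (Lfun ℓ s)⁻¹ :=
    polar_eq d hd ℓ x₀ hr hρ1 hrρ.le
  have hI : Real.log a ≤ ∫ s in r..ρ, (ℓ s / s) * (Lfun ℓ s)⁻¹ :=
    key_integral_lb hℓpos hLfin hr hr1 ha hρ0 hρ1 hLρ Linv hLinv₁ hLinv₂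
  -- membership facts for A
  have hmemA : ∀ z ∈ A, r ≤ ‖z - x₀‖ ∧ ‖z - x₀‖ < ρ := by
    intro z hz
    obtain ⟨h1, h2⟩ := hAsub hz
    rw [mem_ball, dist_eq_norm] at h1
    rw [mem_ball, dist_eq_norm] at h2
    exact ⟨not_lt.1 h2, h1⟩
  -- muMeas A is the plain integral over A
  have hmuA : muMeas d ℓ x₀ r A =
      ∫ z in A, ℓ ‖z - x₀‖ / (Lfun ℓ ‖z - x₀‖ * ‖z - x₀‖ ^ d) := by
    rw [muMeas, inter_eq_left.2 ?_]
    intro z hz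
    exact ⟨(hmemA z hz).1, (hmemA z hz).2.trans hρ1⟩
  -- L values along A
  have hLz : ∀ z ∈ A, Lfun ℓ r / a ≤ Lfun ℓ ‖z - x₀‖ ∧ 0 < Lfun ℓ ‖z - x₀‖ := by
    intro z hz
    obtain ⟨h1, h2⟩ := hmemA z hz
    have hz0 : 0 < ‖z - x₀‖ := lt_of_lt_of_le hr h1
    have hz1 : ‖z - x₀‖ < 1 := h2.trans hρ1
    refine ⟨?_, Lfun_pos hℓpos hLfin hz0 hz1⟩
    rw [← hLρ]
    exact Lfun_anti hℓpos hLfin hz0 h2.le hρ1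
  -- integrability of the two integrands on A
  have hAfin : volume A ≠ ⊤ := by
    refine ne_of_lt (lt_of_le_of_lt (measure_mono ?_) (measure_ball_lt_top (x := x₀) (r := ρ)))
    exact fun z hz => (hAsub hz).1
  have hnormmeas : Measurable fun z : EuclideanSpace ℝ (Fin d) => ‖z - x₀‖ := by fun_prop
  have hLcont : ContinuousOn (fun z : EuclideanSpace ℝ (Fin d) => Lfun ℓ ‖z - x₀‖) A := by
    apply (Lfun_contOn hLfin hr hρ1 (v := ρ)).comp
      (Continuous.continuousOn (by fun_prop))
    intro z hz
    exact ⟨(hmemA z hz).1, (hmemA z hz).2.le⟩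
  have haesm1 : AEStronglyMeasurable
      (fun z : EuclideanSpace ℝ (Fin d) => ℓ ‖z - x₀‖ / ‖z - x₀‖ ^ d)
      (volume.restrict A) := by
    apply Measurable.aestronglyMeasurable
    fun_prop
  have haesm2 : AEStronglyMeasurable
      (fun z : EuclideanSpace ℝ (Fin d) => ℓ ‖z - x₀‖ / (Lfun ℓ ‖z - x₀‖ * ‖z - x₀‖ ^ d))
      (volume.restrict A) := by
    have hLaem : AEMeasurable (fun z : EuclideanSpace ℝ (Fin d) => Lfun ℓ ‖z - x₀‖)
        (volume.restrict A) := (hLcont.aestronglyMeasurable hA).aemeasurable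
    exact ((hℓmeas.comp hnormmeas).aemeasurable.div
      (hLaem.mul (hnormmeas.pow_const d).aemeasurable)).aestronglyMeasurable
  have hrd : (0:ℝ) < r ^ d := pow_pos hr d
  have hbd1 : ∀ z ∈ A, ‖ℓ ‖z - x₀‖ / ‖z - x₀‖ ^ d‖ ≤ M / r ^ d := by
    intro z hz
    obtain ⟨h1, h2⟩ := hmemA z hz
    have hz0 : 0 < ‖z - x₀‖ := lt_of_lt_of_le hr h1
    obtain ⟨hml, hMu⟩ := hbound _ h1 h2.le
    rw [Real.norm_eq_abs, abs_of_nonneg (div_nonneg (hm.le.trans hml) (by positivity))]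
    exact div_le_div₀ hM0 hMu (by positivity) (pow_le_pow_left₀ hr.le h1 d)
  have hbd2 : ∀ z ∈ A, ‖ℓ ‖z - x₀‖ / (Lfun ℓ ‖z - x₀‖ * ‖z - x₀‖ ^ d)‖ ≤
      M / ((Lfun ℓ r / a) * r ^ d) := by
    intro z hz
    obtain ⟨h1, h2⟩ := hmemA z hz
    obtain ⟨hLlow, hLpos⟩ := hLz z hz
    have hz0 : 0 < ‖z - x₀‖ := lt_of_lt_of_le hr h1
    obtain ⟨hml, hMu⟩ := hbound _ h1 h2.le
    rw [Real.norm_eq_abs, abs_of_nonneg (div_nonneg (hm.le.trans hml)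
      (mul_nonneg hLpos.le (by positivity)))]
    apply div_le_div₀ hM0 hMu (by positivity)
    exact mul_le_mul hLlow (pow_le_pow_left₀ hr.le h1 d) (by positivity) hLpos.le
  have hInt1 : IntegrableOn
      (fun z : EuclideanSpace ℝ (Fin d) => ℓ ‖z - x₀‖ / ‖z - x₀‖ ^ d) A volume :=
    ⟨haesm1, HasFiniteIntegral.restrict_of_bounded (C := M / r ^ d) hAfin.lt_top
      ((ae_restrict_iff' hA).2 (Eventually.of_forall hbd1))⟩
  have hInt2 : IntegrableOn
      (fun z : EuclideanSpace ℝ (Fin d) =>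
        ℓ ‖z - x₀‖ / (Lfun ℓ ‖z - x₀‖ * ‖z - x₀‖ ^ d)) A volume :=
    ⟨haesm2, HasFiniteIntegral.restrict_of_bounded (C := M / ((Lfun ℓ r / a) * r ^ d))
      hAfin.lt_top ((ae_restrict_iff' hA).2 (Eventually.of_forall hbd2))⟩
  -- pointwise comparison on A
  have hptwise : ∀ z ∈ A,
      (Lfun ℓ r / a) * (ℓ ‖z - x₀‖ / (Lfun ℓ ‖z - x₀‖ * ‖z - x₀‖ ^ d)) ≤
        ℓ ‖z - x₀‖ / ‖z - x₀‖ ^ d := by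
    intro z hz
    obtain ⟨h1, h2⟩ := hmemA z hz
    obtain ⟨hLlow, hLpos⟩ := hLz z hz
    have hz0 : 0 < ‖z - x₀‖ := lt_of_lt_of_le hr h1
    have hℓnn : 0 ≤ ℓ ‖z - x₀‖ := (hℓpos _ hz0 (h2.trans hρ1)).le
    have heq : (Lfun ℓ r / a) * (ℓ ‖z - x₀‖ / (Lfun ℓ ‖z - x₀‖ * ‖z - x₀‖ ^ d)) =
        ((Lfun ℓ r / a) / Lfun ℓ ‖z - x₀‖) * (ℓ ‖z - x₀‖ / ‖z - x₀‖ ^ d) := by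
      rw [mul_div_assoc', div_mul_div_comm]
    rw [heq]
    apply mul_le_of_le_one_left (div_nonneg hℓnn (by positivity))
    rw [div_le_one hLpos]
    exact hLlow
  have hmono : (Lfun ℓ r / a) * muMeas d ℓ x₀ r A ≤
      ∫ z in A, ℓ ‖z - x₀‖ / ‖z - x₀‖ ^ d := by
    rw [hmuA, ← integral_const_mul]
    exact setIntegral_mono_on (hInt2.const_mul _) hInt1 hA hptwise
  -- final chain
  have hσpos : 0 < sphereSurf d := by
    have hd0 : (0:ℝ) < (d:ℝ) := by exact_mod_cast hd
    have hΓpos : 0 < Real.Gamma ((d:ℝ)/2) := Real.Gamma_pos_of_pos (by linarith)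
    have : 0 < Real.pi ^ ((d:ℝ)/2) := Real.rpow_pos_of_pos Real.pi_pos _
    unfold sphereSurf
    positivity
  have hla : 0 ≤ Real.log a := (Real.log_pos ha).le
  have hK : (1/2) * (sphereSurf d * ∫ s in r..ρ, (ℓ s / s) * (Lfun ℓ s)⁻¹) ≤
      muMeas d ℓ x₀ r A := by
    rw [← hring]
    exact hAmu
  have hIσ : sphereSurf d * Real.log a ≤
      sphereSurf d * ∫ s in r..ρ, (ℓ s / s) * (Lfun ℓ s)⁻¹ :=
    mul_le_mul_of_nonneg_left hI hσpos.le
  have hchain : (Lfun ℓ r / a) * ((1/2) * (sphereSurf d * Real.log a)) ≤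
      ∫ z in A, ℓ ‖z - x₀‖ / ‖z - x₀‖ ^ d := by
    calc (Lfun ℓ r / a) * ((1/2) * (sphereSurf d * Real.log a))
        ≤ (Lfun ℓ r / a) * muMeas d ℓ x₀ r A := by
          apply mul_le_mul_of_nonneg_left _ hc.le
          calc (1/2) * (sphereSurf d * Real.log a)
              ≤ (1/2) * (sphereSurf d * ∫ s in r..ρ, (ℓ s / s) * (Lfun ℓ s)⁻¹) := by
                linarith
            _ ≤ muMeas d ℓ x₀ r A := hK
      _ ≤ ∫ z in A, ℓ ‖z - x₀‖ / ‖z - x₀‖ ^ d := hmono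
  calc sphereSurf d / 2 * Lfun ℓ r * Real.log a / a
      = (Lfun ℓ r / a) * ((1/2) * (sphereSurf d * Real.log a)) := by ring
    _ ≤ ∫ z in A, ℓ ‖z - x₀‖ / ‖z - x₀‖ ^ d := hchain
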